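/- If P is a better partial order, then the set P^# of finite multisets of P equipped with the multiset projectivity relation << is a better partial order. -/

import Mathlib

namespace Paper

/-- `s` is an initial segment of the finite set `t` (w.r.t. the increasing enumerations). -/
def InitSegF (s t : Finset ℕ) : Prop :=
  s ⊆ t ∧ ∀ a ∈ s, ∀ b ∈ t, b ∉ s → a < b

/-- The finite set `s` is an initial segment of the set `B ⊆ ℕ`. -/
def InitSegS (s : Finset ℕ) (B : Set ℕ) : Prop :=
  ↑s ⊆ B ∧ ∀ a ∈ s, ∀ b ∈ B, b ∉ s → a < b

/-- `F` is a front on the infinite set `A ⊆ ℕ`. -/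
def IsFront (F : Set (Finset ℕ)) (A : Set ℕ) : Prop :=
  A.Infinite ∧
  (F = {∅} ∨ (⋃ s ∈ F, (↑s : Set ℕ)) = A) ∧
  (∀ s ∈ F, ∀ t ∈ F, InitSegF s t → s = t) ∧
  (∀ B : Set ℕ, B ⊆ A → B.Infinite → ∃! s, s ∈ F ∧ InitSegS s B)

/-- `t` is a shift of `s`: `s ◁ t`. -/
def Shift (s t : Finset ℕ) : Prop :=
  ∃ B : Set ℕ, B.Infinite ∧ InitSegS s B ∧ InitSegS t (B \ {sInf B})

/-- A super-sequence `f` on the front `F` is bad for the relation `r`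
if `s ◁ t` implies `¬ r (f s) (f t)` for members of `F`. -/
def IsBadSuperSeq {α : Type*} (r : α → α → Prop) (F : Set (Finset ℕ))
    (f : Finset ℕ → α) : Prop :=
  ∀ s ∈ F, ∀ t ∈ F, Shift s t → ¬ r (f s) (f t)

/-- `r` is a better partial order: there is no bad super-sequence for `r`. -/
def IsBpo {α : Type*} (r : α → α → Prop) : Prop :=
  ¬ ∃ (A : Set ℕ) (F : Set (Finset ℕ)) (f : Finset ℕ → α),
      IsFront F A ∧ IsBadSuperSeq r F f



/-- Multiset projectivity: `MProj r N M` (`N << M`) holds iff there is a surjective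
multiset map `f : M ↠ N` with `r (f p) p` for every occurrence `p` of `M`;
equivalently, `M` splits into nonempty fibers indexed by the occurrences of `N`. -/
def MProj {α : Type*} (r : α → α → Prop) (N M : Multiset α) : Prop :=
  ∃ L : Multiset (α × Multiset α),
    L.map Prod.fst = N ∧ (L.map Prod.snd).sum = M ∧
    ∀ x ∈ L, x.2 ≠ 0 ∧ ∀ p ∈ x.2, r x.1 p

/-- Multiset embeddability: `MEmbed r N M` (`N ⪯ M`) holds iff there is an injective
multiset map `g : N ↪ M` with `r q (g q)` for all `q ∈ N`; equivalently, `N` is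
related pointwise to a sub-multiset of `M`. -/
def MEmbed {α : Type*} (r : α → α → Prop) (N M : Multiset α) : Prop :=
  ∃ M' ≤ M, Multiset.Rel r N M'


/-! ### Basic lemmas about initial segments -/

lemma initSegS_empty (B : Set ℕ) : InitSegS ∅ B := by
  constructor
  · simp
  · intro a ha; simp at ha

lemma initSegF_iff {s t : Finset ℕ} : InitSegF s t ↔ InitSegS s ↑t := by
  unfold InitSegF InitSegS
  constructor
  · rintro ⟨h1, h2⟩
    exact ⟨by exact_mod_cast h1, by exact_mod_cast h2⟩
  · rintro ⟨h1, h2⟩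
    exact ⟨by exact_mod_cast h1, by exact_mod_cast h2⟩

lemma initSegS_mono {s : Finset ℕ} {B C : Set ℕ} (h : InitSegS s B) (hsub : ↑s ⊆ C)
    (hC : ∀ c ∈ C, c ∉ B → ∀ a ∈ s, a < c) : InitSegS s C := by
  refine ⟨hsub, fun a ha b hb hbs => ?_⟩
  by_cases hbB : b ∈ B
  · exact h.2 a ha b hbB hbs
  · exact hC b hb hbB a ha

lemma initSegS_trans {s t : Finset ℕ} {B : Set ℕ} (hst : InitSegF s t) (h : InitSegS t B) :
    InitSegS s B := by
  refine ⟨fun x hx => h.1 (by exact_mod_cast hst.1 (by exact_mod_cast hx)), ?_⟩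
  intro a ha b hb hbs
  by_cases hbt : b ∈ t
  · exact hst.2 a ha b hbt hbs
  · exact h.2 a (hst.1 ha) b hb hbt

lemma initSegS_comparable {s t : Finset ℕ} {B : Set ℕ} (hs : InitSegS s B)
    (ht : InitSegS t B) : InitSegF s t ∨ InitSegF t s := by
  have hsub : s ⊆ t ∨ t ⊆ s := by
    by_contra hc
    push_neg at hc
    obtain ⟨⟨a, has, hat⟩, ⟨b, hbt, hbs⟩⟩ :
        (∃ a ∈ s, a ∉ t) ∧ (∃ b ∈ t, b ∉ s) := by
      constructor
      · rcases Finset.not_subset.1 hc.1 with ⟨a, ha1, ha2⟩; exact ⟨a, ha1, ha2⟩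
      · rcases Finset.not_subset.1 hc.2 with ⟨a, ha1, ha2⟩; exact ⟨a, ha1, ha2⟩
    have h1 : a < b := hs.2 a has b (ht.1 hbt) hbs
    have h2 : b < a := ht.2 b hbt a (hs.1 has) hat
    omega
  rcases hsub with hsub | hsub
  · left
    exact ⟨hsub, fun a ha b hb hbs => hs.2 a ha b (ht.1 hb) hbs⟩
  · right
    exact ⟨hsub, fun a ha b hb hbs => ht.2 a ha b (hs.1 hb) hbs⟩

lemma initSegF_comparable {s t u : Finset ℕ} (hs : InitSegF s u) (ht : InitSegF t u) :
    InitSegF s t ∨ InitSegF t s :=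
  initSegS_comparable (initSegF_iff.1 hs) (initSegF_iff.1 ht)

lemma initSegS_min {s : Finset ℕ} {B : Set ℕ} (h : InitSegS s B) (hs : s.Nonempty) :
    sInf B = s.min' hs := by
  have h1 : sInf B ≤ s.min' hs := Nat.sInf_le (h.1 (Finset.coe_mem ⟨_, s.min'_mem hs⟩))
  have hne : B.Nonempty := ⟨s.min' hs, h.1 (by exact_mod_cast s.min'_mem hs)⟩
  have h2 : s.min' hs ≤ sInf B := by
    have hmem := Nat.sInf_mem hne
    by_cases hmem' : sInf B ∈ s
    · exact s.min'_le _ hmem'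
    · exact le_of_lt (h.2 _ (s.min'_mem hs) _ hmem hmem')
  omega

lemma initSegS_min_mem {s : Finset ℕ} {B : Set ℕ} (h : InitSegS s B) (hs : s.Nonempty) :
    sInf B ∈ s := by
  rw [initSegS_min h hs]; exact s.min'_mem hs

lemma initSegS_erase {s : Finset ℕ} {B : Set ℕ} (h : InitSegS s B) (hs : s.Nonempty) :
    InitSegS (s.erase (s.min' hs)) (B \ {sInf B}) := by
  rw [initSegS_min h hs]
  constructor
  · intro x hx
    simp only [Finset.coe_erase, Set.mem_diff, Set.mem_singleton_iff] at hx ⊢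
    exact ⟨h.1 hx.1, hx.2⟩
  · intro a ha b hb hbs
    have hbB : b ∈ B := hb.1
    have hbmin : b ≠ s.min' hs := hb.2
    have has : a ∈ s := Finset.mem_of_mem_erase ha
    by_cases hbsf : b ∈ s
    · -- b ∈ s, b ∉ erase, b ≠ min : contradiction
      exact absurd (Finset.mem_erase.2 ⟨hbmin, hbsf⟩) hbs
    · exact h.2 a has b hbB hbsf

/-- Shift from an infinite set: the initial segments of `B` and `B \ {min}` are shift-related. -/
lemma shift_of_initSegs {s t : Finset ℕ} {B : Set ℕ} (hB : B.Infinite)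
    (hs : InitSegS s B) (ht : InitSegS t (B \ {sInf B})) : Shift s t :=
  ⟨B, hB, hs, ht⟩

/-! ### Front basics -/

lemma infinite_inter_Ioi {A : Set ℕ} (hA : A.Infinite) (n : ℕ) : (A ∩ Set.Ioi n).Infinite := by
  intro hfin
  apply hA
  have : A ⊆ (A ∩ Set.Ioi n) ∪ Set.Iic n := by
    intro x hx
    by_cases hxn : n < x
    · exact Or.inl ⟨hx, hxn⟩
    · exact Or.inr (by simpa using Nat.le_of_not_lt hxn)
  exact Set.Finite.subset (hfin.union (Set.finite_Iic n)) this

lemma front_union_eq {F : Set (Finset ℕ)} {A : Set ℕ} (hF : IsFront F A) (hne : F ≠ {∅}) :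
    (⋃ s ∈ F, (↑s : Set ℕ)) = A := hF.2.1.resolve_left hne

lemma front_mem_subset {F : Set (Finset ℕ)} {A : Set ℕ} (hF : IsFront F A) (hne : F ≠ {∅})
    {s : Finset ℕ} (hs : s ∈ F) : ↑s ⊆ A := by
  rw [← front_union_eq hF hne]
  exact fun x hx => Set.mem_biUnion hs hx

lemma front_empty_not_mem {F : Set (Finset ℕ)} {A : Set ℕ} (hF : IsFront F A) (hne : F ≠ {∅}) :
    ∅ ∉ F := by
  intro hmem
  obtain ⟨s₀, hs₀F, hs₀ne⟩ : ∃ s₀ ∈ F, s₀ ≠ ∅ := by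
    by_contra hc
    push_neg at hc
    exact hne (Set.eq_singleton_iff_unique_mem.2 ⟨hmem, hc⟩)
  have hs₀non : s₀.Nonempty := Finset.nonempty_iff_ne_empty.2 hs₀ne
  set B : Set ℕ := ↑s₀ ∪ (A ∩ Set.Ioi (s₀.max' hs₀non)) with hBdef
  have hBA : B ⊆ A := by
    intro x hx
    rcases hx with hx | hx
    · exact front_mem_subset hF hne hs₀F hx
    · exact hx.1
  have hBinf : B.Infinite := ((infinite_inter_Ioi hF.1 _).mono Set.subset_union_right)
  have hseg : InitSegS s₀ B := by
    refine ⟨Set.subset_union_left, fun a ha b hb hbs => ?_⟩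
    rcases hb with hb | hb
    · exact absurd (by exact_mod_cast hb) hbs
    · exact lt_of_le_of_lt (s₀.le_max' a ha) hb.2
  obtain ⟨u, _, huniq⟩ := hF.2.2.2 B hBA hBinf
  have h1 := huniq ∅ ⟨hmem, initSegS_empty B⟩
  have h2 := huniq s₀ ⟨hs₀F, hseg⟩
  exact hs₀ne (h2.trans h1.symm)

lemma front_mem_nonempty {F : Set (Finset ℕ)} {A : Set ℕ} (hF : IsFront F A) (hne : F ≠ {∅})
    {s : Finset ℕ} (hs : s ∈ F) : s.Nonempty :=
  Finset.nonempty_iff_ne_empty.2 (fun h => front_empty_not_mem hF hne (h ▸ hs))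

/-- The restriction of a front to an infinite subset of its base. -/
def Restrict (F : Set (Finset ℕ)) (B : Set ℕ) : Set (Finset ℕ) := {s ∈ F | ↑s ⊆ B}

lemma restrict_subset (F : Set (Finset ℕ)) (B : Set ℕ) : Restrict F B ⊆ F :=
  fun _ h => h.1

lemma front_restrict {F : Set (Finset ℕ)} {A B : Set ℕ} (hF : IsFront F A)
    (hBA : B ⊆ A) (hB : B.Infinite) : IsFront (Restrict F B) B := by
  refine ⟨hB, ?_, ?_, ?_⟩
  · by_cases hne : F = {∅}
    · left
      subst hne
      apply Set.eq_singleton_iff_unique_mem.2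
      constructor
      · exact ⟨rfl, by simp⟩
      · rintro s ⟨hs, -⟩; exact hs
    · right
      apply Set.Subset.antisymm
      · intro x hx
        simp only [Set.mem_iUnion] at hx
        obtain ⟨s, ⟨-, hsB⟩, hx⟩ := hx
        exact hsB hx
      · intro b hb
        set C : Set ℕ := insert b (B ∩ Set.Ioi b) with hC
        have hCB : C ⊆ B := by
          intro x hx
          rcases hx with rfl | hx
          · exact hb
          · exact hx.1
        have hCinf : C.Infinite := ((infinite_inter_Ioi hB b).mono (Set.subset_insert _ _))
        obtain ⟨s, ⟨hsF, hseg⟩, -⟩ := hF.2.2.2 C (hCB.trans hBA) hCinf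
        have hsne : s.Nonempty := front_mem_nonempty hF hne hsF
        have hmin : sInf C ∈ s := initSegS_min_mem hseg hsne
        have hbC : sInf C = b := by
          have h1 : sInf C ≤ b := Nat.sInf_le (Set.mem_insert _ _)
          have h2 : b ≤ sInf C := by
            have := Nat.sInf_mem (⟨b, Set.mem_insert _ _⟩ : C.Nonempty)
            rcases this with h | h
            · omega
            · exact le_of_lt h.2
          omega
        have hsB : (↑s : Set ℕ) ⊆ B := fun x hx => hCB (hseg.1 hx)
        refine Set.mem_biUnion (show s ∈ Restrict F B from ⟨hsF, hsB⟩) ?_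
        rw [← hbC]; exact_mod_cast hmin
  · intro s hs t ht hst
    exact hF.2.2.1 s hs.1 t ht.1 hst
  · intro C hCB hCinf
    obtain ⟨s, ⟨hsF, hseg⟩, huniq⟩ := hF.2.2.2 C (hCB.trans hBA) hCinf
    refine ⟨s, ⟨⟨hsF, fun x hx => hCB (hseg.1 hx)⟩, hseg⟩, ?_⟩
    rintro t ⟨⟨htF, -⟩, htseg⟩
    exact huniq t ⟨htF, htseg⟩

/-! ### Shift basics -/

lemma front_shift_pair {F : Set (Finset ℕ)} {A : Set ℕ} (hF : IsFront F A) :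
    ∃ s ∈ F, ∃ t ∈ F, Shift s t := by
  obtain ⟨s, ⟨hsF, hseg⟩, -⟩ := hF.2.2.2 A (le_refl _) hF.1
  have hinf : (A \ {sInf A}).Infinite := hF.1.diff (Set.finite_singleton _)
  obtain ⟨t, ⟨htF, htseg⟩, -⟩ := hF.2.2.2 (A \ {sInf A}) Set.diff_subset hinf
  exact ⟨s, hsF, t, htF, A, hF.1, hseg, htseg⟩

lemma front_shift_chain {F : Set (Finset ℕ)} {A : Set ℕ} (hF : IsFront F A) :
    ∃ g : ℕ → Finset ℕ, (∀ n, g n ∈ F) ∧ ∀ n, Shift (g n) (g (n+1)) := by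
  let D : ℕ → Set ℕ := fun n => Nat.rec A (fun _ X => X \ {sInf X}) n
  have hDinf : ∀ n, (D n).Infinite := by
    intro n
    induction n with
    | zero => exact hF.1
    | succ k ih => exact ih.diff (Set.finite_singleton _)
  have hDsub : ∀ n, D n ⊆ A := by
    intro n
    induction n with
    | zero => exact le_refl _
    | succ k ih => exact Set.diff_subset.trans ih
  have hseg : ∀ n, ∃ s, s ∈ F ∧ InitSegS s (D n) := by
    intro n
    obtain ⟨s, hs, -⟩ := hF.2.2.2 (D n) (hDsub n) (hDinf n)
    exact ⟨s, hs⟩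
  choose g hgF hgseg using hseg
  refine ⟨g, hgF, fun n => ⟨D n, hDinf n, hgseg n, ?_⟩⟩
  exact hgseg (n+1)

lemma shift_dest {s t : Finset ℕ} (hs : s.Nonempty) (h : Shift s t) :
    (∀ b ∈ t, s.min' hs < b) ∧
    (InitSegF (s.erase (s.min' hs)) t ∨ InitSegF t (s.erase (s.min' hs))) := by
  obtain ⟨B, hB, hsB, htB⟩ := h
  have hmin := initSegS_min hsB hs
  constructor
  · intro b hb
    have hbB : b ∈ B := (htB.1 hb).1
    have hbne : b ≠ sInf B := (htB.1 hb).2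
    by_cases hbs : b ∈ s
    · have := s.min'_le b hbs
      rw [hmin] at hbne
      omega
    · exact hsB.2 _ (s.min'_mem hs) b hbB hbs
  · have h1 : InitSegS (s.erase (s.min' hs)) (B \ {sInf B}) := initSegS_erase hsB hs
    exact initSegS_comparable h1 htB

lemma shift_intro {s t : Finset ℕ} (hs : s.Nonempty)
    (hmin : ∀ b ∈ t, s.min' hs < b)
    (hcomp : InitSegF (s.erase (s.min' hs)) t ∨ InitSegF t (s.erase (s.min' hs))) :
    Shift s t := by
  classical
  set m : ℕ := (s ∪ t).max' (Finset.Nonempty.inl hs) with hm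
  set B : Set ℕ := ↑(s ∪ t) ∪ Set.Ioi m with hB
  have hBinf : B.Infinite := (Set.Ioi_infinite m).mono Set.subset_union_right
  have hle_m : ∀ x ∈ s ∪ t, x ≤ m := fun x hx => Finset.le_max' _ x hx
  have hsmem : s.min' hs ∈ s ∪ t := Finset.mem_union_left t (s.min'_mem hs)
  have hminB : sInf B = s.min' hs := by
    apply le_antisymm
    · exact Nat.sInf_le (Or.inl (by exact_mod_cast hsmem))
    · have hne : B.Nonempty := ⟨s.min' hs, Or.inl (by exact_mod_cast hsmem)⟩
      have hmem := Nat.sInf_mem hne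
      rcases hmem with hmem | hmem
      · have hmem' : sInf B ∈ s ∪ t := by exact_mod_cast hmem
        rcases Finset.mem_union.1 hmem' with h' | h'
        · exact s.min'_le _ h'
        · exact le_of_lt (hmin _ h')
      · have h1 : m < sInf B := hmem
        have h2 : s.min' hs ≤ m := hle_m _ hsmem
        omega
  have herase : ∀ a ∈ s, a ∉ s.erase (s.min' hs) → a = s.min' hs := by
    intro a ha hae
    by_contra hne
    exact hae (Finset.mem_erase.2 ⟨hne, ha⟩)
  refine ⟨B, hBinf, ⟨?_, ?_⟩, ?_⟩
  · intro x hx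
    exact Or.inl (by exact_mod_cast Finset.mem_union_left t (by exact_mod_cast hx))
  · intro a ha b hb hbs
    rcases hb with hb | hb
    · have hb' : b ∈ s ∪ t := by exact_mod_cast hb
      rcases Finset.mem_union.1 hb' with h' | h'
      · exact absurd h' hbs
      · rcases hcomp with hc | hc
        · by_cases hbe : b ∈ s.erase (s.min' hs)
          · exact absurd (Finset.mem_of_mem_erase hbe) hbs
          · by_cases hae : a ∈ s.erase (s.min' hs)
            · exact hc.2 a hae b h' hbe
            · rw [herase a ha hae]
              exact hmin b h'
        · exact absurd (Finset.mem_of_mem_erase (hc.1 h')) hbs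
    · have h1 : a ≤ m := hle_m a (Finset.mem_union_left t ha)
      have h2 : m < b := hb
      omega
  · rw [hminB]
    constructor
    · intro x hx
      have hx' : x ∈ t := by exact_mod_cast hx
      refine ⟨Or.inl (by exact_mod_cast Finset.mem_union_right s hx'), ?_⟩
      have := hmin x hx'
      simp only [Set.mem_singleton_iff]
      omega
    · intro a ha b hb hbt
      obtain ⟨hbB, hbne⟩ := hb
      simp only [Set.mem_singleton_iff] at hbne
      rcases hbB with hb' | hb'
      · have hb'' : b ∈ s ∪ t := by exact_mod_cast hb'
        rcases Finset.mem_union.1 hb'' with h' | h'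
        · have hbe : b ∈ s.erase (s.min' hs) := Finset.mem_erase.2 ⟨hbne, h'⟩
          rcases hcomp with hc | hc
          · exact absurd (hc.1 hbe) hbt
          · exact hc.2 a ha b hbe hbt
        · exact absurd h' hbt
      · have h1 : a ≤ m := hle_m a (Finset.mem_union_right s ha)
        have h2 : m < b := hb'
        omega

/-! ### Derived fronts and the Nash-Williams partition theorem -/

def deriv (F : Set (Finset ℕ)) (a : ℕ) : Set (Finset ℕ) :=
  {t | insert a t ∈ F ∧ ∀ x ∈ t, a < x}

lemma initSegS_insert {t : Finset ℕ} {C : Set ℕ} {a : ℕ} (hC : ∀ c ∈ C, a < c)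
    (h : InitSegS t C) : InitSegS (insert a t) (insert a C) := by
  constructor
  · intro x hx
    have hx' : x ∈ insert a t := by exact_mod_cast hx
    rcases Finset.mem_insert.1 hx' with rfl | hx''
    · exact Set.mem_insert _ _
    · exact Set.mem_insert_of_mem _ (h.1 hx'')
  · intro x hx b hb hbs
    have hba : b ≠ a := fun hba => hbs (by rw [hba]; exact Finset.mem_insert_self _ _)
    have hbC : b ∈ C := hb.resolve_left hba
    have hbt : b ∉ t := fun hbt => hbs (Finset.mem_insert_of_mem hbt)
    rcases Finset.mem_insert.1 hx with rfl | hx'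
    · exact hC b hbC
    · exact h.2 x hx' b hbC hbt

lemma deriv_mem_gt {F : Set (Finset ℕ)} {a : ℕ} {t : Finset ℕ} (h : t ∈ deriv F a) :
    ∀ x ∈ t, a < x := h.2

lemma deriv_not_mem {F : Set (Finset ℕ)} {a : ℕ} {t : Finset ℕ} (h : t ∈ deriv F a) : a ∉ t :=
  fun ha => lt_irrefl a (h.2 a ha)

lemma deriv_thin {F : Set (Finset ℕ)} {A : Set ℕ} (hF : IsFront F A) (a : ℕ) :
    ∀ t ∈ deriv F a, ∀ t' ∈ deriv F a, InitSegF t t' → t = t' := by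
  intro t ht t' ht' hseg
  have h1 : InitSegF (insert a t) (insert a t') := by
    constructor
    · exact Finset.insert_subset_insert _ hseg.1
    · intro x hx b hb hbs
      have hba : b ≠ a := fun hba => hbs (by rw [hba]; exact Finset.mem_insert_self _ _)
      have hbt' : b ∈ t' := (Finset.mem_insert.1 hb).resolve_left hba
      have hbt : b ∉ t := fun hbt => hbs (Finset.mem_insert_of_mem hbt)
      rcases Finset.mem_insert.1 hx with rfl | hx'
      · exact ht'.2 b hbt'
      · exact hseg.2 x hx' b hbt' hbt
  have h2 := hF.2.2.1 _ ht.1 _ ht'.1 h1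
  have hat : a ∉ t := deriv_not_mem ht
  have hat' : a ∉ t' := deriv_not_mem ht'
  calc t = (insert a t).erase a := by rw [Finset.erase_insert hat]
    _ = (insert a t').erase a := by rw [h2]
    _ = t' := Finset.erase_insert hat'

lemma deriv_front {F : Set (Finset ℕ)} {A : Set ℕ} (hF : IsFront F A) (hne : F ≠ {∅})
    {a : ℕ} (haA : a ∈ A) : IsFront (deriv F a) (A ∩ Set.Ioi a) := by
  have hinf : (A ∩ Set.Ioi a).Infinite := infinite_inter_Ioi hF.1 a
  -- the ∃! condition
  have hExu : ∀ C : Set ℕ, C ⊆ A ∩ Set.Ioi a → C.Infinite →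
      ∃! t, t ∈ deriv F a ∧ InitSegS t C := by
    intro C hCA hCinf
    have hC' : insert a C ⊆ A := by
      intro x hx
      rcases hx with rfl | hx
      · exact haA
      · exact (hCA hx).1
    have hCgt : ∀ c ∈ C, a < c := fun c hc => (hCA hc).2
    obtain ⟨s, ⟨hsF, hseg⟩, huniq⟩ := hF.2.2.2 (insert a C) hC' (hCinf.mono (Set.subset_insert _ _))
    have hsne : s.Nonempty := front_mem_nonempty hF hne hsF
    have hmins : sInf (insert a C) = a := by
      apply le_antisymm
      · exact Nat.sInf_le (Set.mem_insert _ _)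
      · have := Nat.sInf_mem (⟨a, Set.mem_insert _ _⟩ : (insert a C).Nonempty)
        rcases this with h | h
        · omega
        · exact le_of_lt (hCgt _ h)
    have haS : a ∈ s := by
      have := initSegS_min_mem hseg hsne
      rwa [hmins] at this
    refine ⟨s.erase a, ⟨⟨?_, ?_⟩, ?_, ?_⟩, ?_⟩
    · rwa [Finset.insert_erase haS]
    · intro x hx
      have hxs : x ∈ s := Finset.mem_of_mem_erase hx
      have hxa : x ≠ a := (Finset.mem_erase.1 hx).1
      have : (x : ℕ) ∈ insert a C := hseg.1 hxs
      rcases this with rfl | hx'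
      · omega
      · exact hCgt _ hx'
    · -- ↑(s.erase a) ⊆ C
      intro x hx
      have hx' : x ∈ s.erase a := by exact_mod_cast hx
      have hxs : x ∈ s := Finset.mem_of_mem_erase hx'
      have hxa : x ≠ a := (Finset.mem_erase.1 hx').1
      have : (x : ℕ) ∈ insert a C := hseg.1 hxs
      exact this.resolve_left hxa
    · intro x hx b hb hbs
      have hxs : x ∈ s := Finset.mem_of_mem_erase hx
      have hbs' : b ∉ s := by
        intro hbsmem
        have hba : b ≠ a := by
          have := hCgt b hb; omega
        exact hbs (Finset.mem_erase.2 ⟨hba, hbsmem⟩)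
      exact hseg.2 x hxs b (Set.mem_insert_of_mem _ hb) hbs'
    · -- uniqueness
      rintro t' ⟨⟨ht'F, ht'gt⟩, ht'seg⟩
      have h1 : InitSegS (insert a t') (insert a C) := initSegS_insert hCgt ht'seg
      have h2 : insert a t' = s := huniq _ ⟨ht'F, h1⟩
      have hat' : a ∉ t' := fun h => lt_irrefl a (ht'gt a h)
      rw [← h2, Finset.erase_insert hat']
  refine ⟨hinf, ?_, fun t ht t' ht' => deriv_thin hF a t ht t' ht', hExu⟩
  by_cases hempty : ∅ ∈ deriv F a
  · left
    apply Set.eq_singleton_iff_unique_mem.2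
    refine ⟨hempty, fun t ht => ?_⟩
    exact (deriv_thin hF a ∅ hempty t ht ⟨Finset.empty_subset _, by simp⟩).symm
  · right
    apply Set.Subset.antisymm
    · intro x hx
      simp only [Set.mem_iUnion] at hx
      obtain ⟨t, ht, hx⟩ := hx
      have hx' : x ∈ t := by exact_mod_cast hx
      have h1 : insert a t ∈ F := ht.1
      have h2 : (x : ℕ) ∈ A := front_mem_subset hF hne h1 (by
        exact_mod_cast Finset.mem_insert_of_mem hx')
      exact ⟨h2, ht.2 x hx'⟩
    · intro b hb
      set C : Set ℕ := insert b (A ∩ Set.Ioi b) with hC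
      have hCsub : C ⊆ A ∩ Set.Ioi a := by
        intro x hx
        rcases hx with rfl | hx
        · exact hb
        · exact ⟨hx.1, by have := hx.2; have := hb.2; simp only [Set.mem_Ioi] at *; omega⟩
      obtain ⟨t, ⟨htD, htseg⟩, -⟩ := hExu C hCsub
        ((infinite_inter_Ioi hF.1 b).mono (Set.subset_insert _ _))
      have htne : t.Nonempty := by
        rcases Finset.eq_empty_or_nonempty t with rfl | h
        · exact absurd htD hempty
        · exact h
      have hminC : sInf C = b := by
        apply le_antisymm
        · exact Nat.sInf_le (Set.mem_insert _ _)
        · have := Nat.sInf_mem (⟨b, Set.mem_insert _ _⟩ : C.Nonempty)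
          rcases this with h | h
          · omega
          · exact le_of_lt h.2
      have hbt : b ∈ t := by
        have := initSegS_min_mem htseg htne
        rwa [hminC] at this
      exact Set.mem_biUnion htD (by exact_mod_cast hbt)

/-- Bundled fronts. -/
def FrontP : Type := {p : Set (Finset ℕ) × Set ℕ // IsFront p.1 p.2}

/-- The derivation relation on bundled fronts. -/
def Der (q p : FrontP) : Prop :=
  p.1.1 ≠ {∅} ∧ ∃ a ∈ p.1.2, q.1.1 = deriv p.1.1 a ∧ q.1.2 = p.1.2 ∩ Set.Ioi a

lemma der_wf : WellFounded Der := by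
  constructor
  intro p
  by_contra hacc
  -- build an infinite descending chain
  have hstep : ∀ q : FrontP, ¬ Acc Der q → ∃ q' : FrontP, Der q' q ∧ ¬ Acc Der q' := by
    intro q hq
    by_contra hc
    push_neg at hc
    exact hq (Acc.intro q (fun q' hq' => by
      by_contra h'
      exact h' (hc q' hq')))
  let f : ℕ → {q : FrontP // ¬ Acc Der q} := fun n =>
    Nat.rec ⟨p, hacc⟩ (fun _ q =>
      ⟨Classical.choose (hstep q.1 q.2), (Classical.choose_spec (hstep q.1 q.2)).2⟩) n
  have hf : ∀ n, Der (f (n+1)).1 (f n).1 := fun n =>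
    (Classical.choose_spec (hstep (f n).1 (f n).2)).1
  -- extract the data
  choose hne a haA hFder hAder using hf
  -- a is strictly monotone, A's are decreasing
  have hAsub : ∀ n, (f (n+1)).1.1.2 ⊆ (f n).1.1.2 := by
    intro n
    rw [hAder n]
    exact Set.inter_subset_left
  have hAchain : ∀ k n, k ≤ n → (f n).1.1.2 ⊆ (f k).1.1.2 := by
    intro k n hkn
    induction n with
    | zero => have : k = 0 := by omega
              subst this; exact le_refl _
    | succ m ih =>
      rcases Nat.eq_or_lt_of_le hkn with rfl | h
      · exact le_refl _
      · exact (hAsub m).trans (ih (by omega))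
  have hagt : ∀ n, ∀ x ∈ (f (n+1)).1.1.2, a n < x := by
    intro n x hx
    rw [hAder n] at hx
    exact hx.2
  -- the union of the a's, from index k on
  set B : ℕ → Set ℕ := fun k => (fun j => a j) '' Set.Ici k with hBdef
  have haij : ∀ k j, k ≤ j → a j ∈ (f k).1.1.2 := by
    intro k j hkj
    exact hAchain k j hkj (haA j)
  have hBsub : ∀ k, B k ⊆ (f k).1.1.2 := by
    rintro k x ⟨j, hj, rfl⟩
    exact haij k j hj
  have hamono : StrictMono a := by
    apply strictMono_nat_of_lt_succ
    intro n
    exact hagt n (a (n+1)) (haA (n+1))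
  have hBinf : ∀ k, (B k).Infinite := fun k =>
    Set.Infinite.image (Set.injOn_of_injective hamono.injective) (Set.Ici_infinite k)
  -- the canonical initial segments
  have hseg : ∀ k, ∃ t, (t ∈ (f k).1.1.1 ∧ InitSegS t (B k)) ∧
      ∀ t', t' ∈ (f k).1.1.1 ∧ InitSegS t' (B k) → t' = t := by
    intro k
    obtain ⟨t, ht, huniq⟩ := (f k).1.2.2.2.2 (B k) (hBsub k) (hBinf k)
    exact ⟨t, ht, huniq⟩
  choose t ht huniq using hseg
  -- key step : t k = insert (a k) (t (k+1))
  have hkey : ∀ k, t k = insert (a k) (t (k+1)) := by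
    intro k
    have h1 : t (k+1) ∈ deriv (f k).1.1.1 (a k) := by
      have := (ht (k+1)).1
      rwa [hFder k] at this
    have h2 : insert (a k) (t (k+1)) ∈ (f k).1.1.1 := h1.1
    have hgt : ∀ c ∈ B (k+1), a k < c := by
      rintro c ⟨j, hj, rfl⟩
      exact hamono (by exact hj : k < j)
    have hBk : B k = insert (a k) (B (k+1)) := by
      ext x
      constructor
      · rintro ⟨j, hj, rfl⟩
        rcases Nat.eq_or_lt_of_le (by exact hj : k ≤ j) with rfl | h
        · exact Set.mem_insert _ _
        · exact Set.mem_insert_of_mem _ ⟨j, h, rfl⟩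
      · rintro (rfl | ⟨j, hj, rfl⟩)
        · exact ⟨k, le_refl k, rfl⟩
        · exact ⟨j, Set.mem_Ici.mpr (le_of_lt (by exact hj : k < j)), rfl⟩
    have h3 : InitSegS (insert (a k) (t (k+1))) (B k) := by
      rw [hBk]
      exact initSegS_insert hgt (ht (k+1)).2
    exact (huniq k _ ⟨h2, h3⟩).symm
  have hcard : ∀ k, (t 0).card = k + (t k).card := by
    intro k
    induction k with
    | zero => omega
    | succ m ih =>
      rw [ih, hkey m, Finset.card_insert_of_notMem]
      · omega
      · intro hmem
        have h1 := ((ht (m+1)).2).1 hmem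
        have h2 := hBsub (m+1) h1
        rw [hAder m] at h2
        have h3 : a m < a m := h2.2
        omega
  have := hcard ((t 0).card + 1)
  omega

/-- The Nash-Williams partition theorem for fronts. -/
theorem nash_williams {F : Set (Finset ℕ)} {A : Set ℕ} (hF : IsFront F A)
    (S : Set (Finset ℕ)) {C : Set ℕ} (hCA : C ⊆ A) (hC : C.Infinite) :
    ∃ B ⊆ C, B.Infinite ∧
      ((∀ s ∈ F, ↑s ⊆ B → s ∈ S) ∨ (∀ s ∈ F, ↑s ⊆ B → s ∉ S)) := by
  -- by well-founded induction on Der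
  suffices H : ∀ p : FrontP, ∀ S : Set (Finset ℕ), ∀ C : Set ℕ, C ⊆ p.1.2 → C.Infinite →
      ∃ B ⊆ C, B.Infinite ∧
        ((∀ s ∈ p.1.1, ↑s ⊆ B → s ∈ S) ∨ (∀ s ∈ p.1.1, ↑s ⊆ B → s ∉ S)) by
    exact H ⟨(F, A), hF⟩ S C hCA hC
  intro p
  induction p using WellFounded.induction der_wf with
  | _ p IH =>
  intro S C hCA hC
  obtain ⟨⟨F, A⟩, hF⟩ := p
  simp only at hCA IH ⊢
  by_cases hne : F = {∅}
  · subst hne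
    by_cases hS : ∅ ∈ S
    · exact ⟨C, le_refl _, hC, Or.inl (fun s hs _ => by rwa [hs])⟩
    · exact ⟨C, le_refl _, hC, Or.inr (fun s hs _ => by rwa [hs])⟩
  · -- fusion
    have hstep : ∀ D : Set ℕ, D ⊆ C → D.Infinite →
        ∃ D' : Set ℕ, D' ⊆ D ∩ Set.Ioi (sInf D) ∧ D'.Infinite ∧
          ((∀ u ∈ deriv F (sInf D), ↑u ⊆ D' → insert (sInf D) u ∈ S) ∨
           (∀ u ∈ deriv F (sInf D), ↑u ⊆ D' → insert (sInf D) u ∉ S)) := by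
      intro D hDC hDinf
      set a := sInf D with ha
      have haD : a ∈ D := Nat.sInf_mem hDinf.nonempty
      have haA : a ∈ A := hCA (hDC haD)
      have hq : IsFront (deriv F a) (A ∩ Set.Ioi a) := deriv_front hF hne haA
      have hDer : Der ⟨(deriv F a, A ∩ Set.Ioi a), hq⟩ ⟨(F, A), hF⟩ :=
        ⟨hne, a, haA, rfl, rfl⟩
      have hsub : D ∩ Set.Ioi a ⊆ A ∩ Set.Ioi a :=
        Set.inter_subset_inter_left _ (fun x hx => hCA (hDC hx))
      obtain ⟨D', hD'sub, hD'inf, hD'hom⟩ :=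
        IH _ hDer {u | insert a u ∈ S} (D ∩ Set.Ioi a) hsub (infinite_inter_Ioi hDinf a)
      exact ⟨D', hD'sub, hD'inf, hD'hom⟩
    -- build the fusion sequence
    let T := {D : Set ℕ // D ⊆ C ∧ D.Infinite}
    have step' : ∀ d : T, ∃ D' : Set ℕ, D' ⊆ d.1 ∩ Set.Ioi (sInf d.1) ∧ D'.Infinite ∧
        ((∀ u ∈ deriv F (sInf d.1), ↑u ⊆ D' → insert (sInf d.1) u ∈ S) ∨
         (∀ u ∈ deriv F (sInf d.1), ↑u ⊆ D' → insert (sInf d.1) u ∉ S)) :=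
      fun d => hstep d.1 d.2.1 d.2.2
    let next : T → T := fun d =>
      ⟨Classical.choose (step' d),
       ⟨((Classical.choose_spec (step' d)).1.trans Set.inter_subset_left).trans d.2.1,
        (Classical.choose_spec (step' d)).2.1⟩⟩
    let D : ℕ → T := fun n => Nat.rec ⟨C, le_refl _, hC⟩ (fun _ d => next d) n
    have hDsucc : ∀ n, D (n+1) = next (D n) := fun n => rfl
    set a : ℕ → ℕ := fun n => sInf (D n).1 with haDef
    have hspec : ∀ n, (D (n+1)).1 ⊆ (D n).1 ∩ Set.Ioi (a n) ∧
        ((∀ u ∈ deriv F (a n), ↑u ⊆ (D (n+1)).1 → insert (a n) u ∈ S) ∨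
         (∀ u ∈ deriv F (a n), ↑u ⊆ (D (n+1)).1 → insert (a n) u ∉ S)) := by
      intro n
      have h := Classical.choose_spec (step' (D n))
      exact ⟨h.1, h.2.2⟩
    have haD : ∀ n, a n ∈ (D n).1 := fun n => Nat.sInf_mem (D n).2.2.nonempty
    have hDsub : ∀ n, (D (n+1)).1 ⊆ (D n).1 := fun n =>
      (hspec n).1.trans Set.inter_subset_left
    have hDchain : ∀ k n, k ≤ n → (D n).1 ⊆ (D k).1 := by
      intro k n hkn
      induction n with
      | zero => have : k = 0 := by omega
                subst this; exact le_refl _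
      | succ m ih =>
        rcases Nat.eq_or_lt_of_le hkn with rfl | h
        · exact le_refl _
        · exact (hDsub m).trans (ih (by omega))
    have hamono : StrictMono a := by
      apply strictMono_nat_of_lt_succ
      intro n
      exact ((hspec n).1 (haD (n+1))).2
    -- pick the homogeneous branch
    set I : Set ℕ := {n | ∀ u ∈ deriv F (a n), ↑u ⊆ (D (n+1)).1 → insert (a n) u ∈ S} with hI
    have hIc : ∀ n, n ∉ I → ∀ u ∈ deriv F (a n), ↑u ⊆ (D (n+1)).1 → insert (a n) u ∉ S := by
      intro n hn
      rcases (hspec n).2 with h | h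
      · exact absurd h hn
      · exact h
    have hJinf : I.Infinite ∨ (Iᶜ : Set ℕ).Infinite := by
      by_contra hcon
      push_neg at hcon
      have : (Set.univ : Set ℕ).Finite := by
        have : (I ∪ Iᶜ : Set ℕ) = Set.univ := Set.union_compl_self I
        rw [← this]
        exact hcon.1.union hcon.2
      exact Set.infinite_univ this
    -- common homogeneity argument
    have main : ∀ J : Set ℕ, J.Infinite →
        (∀ s ∈ F, ∀ (hsne : s.Nonempty), ∀ k ∈ J, ↑s ⊆ (fun n => a n) '' J →
          s.min' hsne = a k → (s.erase (a k) ∈ deriv F (a k) ∧ ↑(s.erase (a k)) ⊆ (D (k+1)).1)) := by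
      intro J hJ s hsF hsne k hkJ hsub hmin
      have hak : a k ∈ s := by rw [← hmin]; exact s.min'_mem hsne
      have hgt : ∀ x ∈ s.erase (a k), a k < x := by
        intro x hx
        have hxs : x ∈ s := Finset.mem_of_mem_erase hx
        have hxa : x ≠ a k := (Finset.mem_erase.1 hx).1
        have := s.min'_le x hxs
        rw [hmin] at this
        omega
      have hD1 : ↑(s.erase (a k)) ⊆ (D (k+1)).1 := by
        intro x hx
        have hx' : x ∈ s.erase (a k) := by exact_mod_cast hx
        have hxs : x ∈ s := Finset.mem_of_mem_erase hx'
        obtain ⟨j, hjJ, hjx⟩ := hsub (by exact_mod_cast hxs)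
        have hkj : k < j := by
          have := hgt x hx'
          rw [← hjx] at this
          exact hamono.lt_iff_lt.1 this
        rw [← hjx]
        exact hDchain (k+1) j hkj (haD j)
      refine ⟨⟨?_, hgt⟩, hD1⟩
      rwa [Finset.insert_erase hak]
    have homog : ∀ J : Set ℕ, J.Infinite → ∀ s ∈ F, ↑s ⊆ (fun n => a n) '' J →
        ∃ k ∈ J, s = insert (a k) (s.erase (a k)) ∧ s.erase (a k) ∈ deriv F (a k) ∧
          ↑(s.erase (a k)) ⊆ (D (k+1)).1 := by
      intro J hJ s hsF hsub
      have hsne : s.Nonempty := front_mem_nonempty hF hne hsF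
      obtain ⟨k, hkJ, hk⟩ := hsub (by exact_mod_cast s.min'_mem hsne)
      have hk' : a k = s.min' hsne := hk
      obtain ⟨h1, h2⟩ := main J hJ s hsF hsne k hkJ hsub hk'.symm
      have hak : a k ∈ s := by rw [hk']; exact s.min'_mem hsne
      exact ⟨k, hkJ, (Finset.insert_erase hak).symm, h1, h2⟩
    rcases hJinf with hJ | hJ
    · refine ⟨(fun n => a n) '' I, ?_, ?_, Or.inl ?_⟩
      · rintro x ⟨j, hjI, rfl⟩
        exact (D j).2.1 (haD j)
      · exact Set.Infinite.image (Set.injOn_of_injective hamono.injective) hJ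
      · intro s hsF hsub
        obtain ⟨k, hkI, hs, hd, hD1⟩ := homog I hJ s hsF hsub
        rw [hs]
        exact hkI _ hd hD1
    · refine ⟨(fun n => a n) '' Iᶜ, ?_, ?_, Or.inr ?_⟩
      · rintro x ⟨j, hjI, rfl⟩
        exact (D j).2.1 (haD j)
      · exact Set.Infinite.image (Set.injOn_of_injective hamono.injective) hJ
      · intro s hsF hsub
        obtain ⟨k, hkI, hs, hd, hD1⟩ := homog Iᶜ hJ s hsF hsub
        rw [hs]
        exact hIc k hkI _ hd hD1

/-! ### The pair front -/

lemma initSegF_refl (s : Finset ℕ) : InitSegF s s :=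
  ⟨Finset.Subset.refl s, fun _ _ b hb hbs => absurd hb hbs⟩

lemma initSegF_trans {s t u : Finset ℕ} (h1 : InitSegF s t) (h2 : InitSegF t u) :
    InitSegF s u :=
  initSegF_iff.2 (initSegS_trans h1 (initSegF_iff.1 h2))

def PairFront (F : Set (Finset ℕ)) : Set (Finset ℕ) :=
  {u | ∃ s t, s ∈ F ∧ t ∈ F ∧ Shift s t ∧ u = s ∪ t}

section PairFrontLemmas

variable {s t : Finset ℕ}

lemma shift_union_min (hs : s.Nonempty) (h : Shift s t) :
    (s ∪ t).min' (Finset.Nonempty.inl hs) = s.min' hs := by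
  obtain ⟨hmin, -⟩ := shift_dest hs h
  apply le_antisymm
  · exact Finset.min'_le _ _ (Finset.mem_union_left t (s.min'_mem hs))
  · apply Finset.le_min'
    intro y hy
    rcases Finset.mem_union.1 hy with hy | hy
    · exact s.min'_le y hy
    · exact le_of_lt (hmin y hy)

lemma shift_union_erase (hs : s.Nonempty) (h : Shift s t) :
    (s ∪ t).erase (s.min' hs) = s.erase (s.min' hs) ∪ t := by
  obtain ⟨hmin, -⟩ := shift_dest hs h
  ext x
  simp only [Finset.mem_erase, Finset.mem_union]
  constructor
  · rintro ⟨hne, hx | hx⟩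
    · exact Or.inl ⟨hne, hx⟩
    · exact Or.inr hx
  · rintro (⟨hne, hx⟩ | hx)
    · exact ⟨hne, Or.inl hx⟩
    · refine ⟨?_, Or.inr hx⟩
      have := hmin x hx
      omega

lemma shift_union_left (hs : s.Nonempty) (h : Shift s t) : InitSegF s (s ∪ t) := by
  obtain ⟨hmin, hcomp⟩ := shift_dest hs h
  refine ⟨Finset.subset_union_left, ?_⟩
  intro a ha b hb hbs
  have hbt : b ∈ t := (Finset.mem_union.1 hb).resolve_left hbs
  rcases hcomp with hc | hc
  · by_cases hae : a ∈ s.erase (s.min' hs)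
    · by_cases hbe : b ∈ s.erase (s.min' hs)
      · exact absurd (Finset.mem_of_mem_erase hbe) hbs
      · exact hc.2 a hae b hbt hbe
    · have : a = s.min' hs := by
        by_contra hne
        exact hae (Finset.mem_erase.2 ⟨hne, ha⟩)
      rw [this]
      exact hmin b hbt
  · exact absurd (Finset.mem_of_mem_erase (hc.1 hbt)) hbs

lemma shift_union_right (hs : s.Nonempty) (h : Shift s t) :
    InitSegF t ((s ∪ t).erase (s.min' hs)) := by
  obtain ⟨hmin, hcomp⟩ := shift_dest hs h
  rw [shift_union_erase hs h]
  rcases hcomp with hc | hc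
  · have : s.erase (s.min' hs) ∪ t = t := Finset.union_eq_right.2 hc.1
    rw [this]
    exact initSegF_refl t
  · have : s.erase (s.min' hs) ∪ t = s.erase (s.min' hs) := Finset.union_eq_left.2 hc.1
    rw [this]
    exact hc

end PairFrontLemmas

section PairFrontMain

variable {F : Set (Finset ℕ)} {A : Set ℕ}

lemma initSegF_min_eq {u u' : Finset ℕ} (h : InitSegF u u') (hu : u.Nonempty) :
    u'.min' (hu.mono h.1) = u.min' hu := by
  apply le_antisymm
  · exact Finset.min'_le _ _ (h.1 (u.min'_mem hu))
  · apply Finset.le_min'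
    intro y hy
    by_cases hyu : y ∈ u
    · exact u.min'_le y hyu
    · exact le_of_lt (h.2 _ (u.min'_mem hu) y hy hyu)

lemma initSegF_erase {u u' : Finset ℕ} (h : InitSegF u u') {m : ℕ} :
    InitSegF (u.erase m) (u'.erase m) := by
  constructor
  · exact Finset.erase_subset_erase m h.1
  · intro x hx b hb hbs
    have hxu : x ∈ u := Finset.mem_of_mem_erase hx
    have hbm : b ≠ m := (Finset.mem_erase.1 hb).1
    have hbu : b ∉ u := fun hc => hbs (Finset.mem_erase.2 ⟨hbm, hc⟩)
    exact h.2 x hxu b (Finset.mem_of_mem_erase hb) hbu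

/-- Uniqueness of the decomposition of a member of the pair front. -/
lemma pairfront_unique (hF : IsFront F A) (hne : F ≠ {∅})
    {s t s' t' : Finset ℕ} (hs : s ∈ F) (ht : t ∈ F) (hst : Shift s t)
    (hs' : s' ∈ F) (ht' : t' ∈ F) (hst' : Shift s' t')
    (huu : s ∪ t = s' ∪ t') : s = s' ∧ t = t' := by
  have hsne : s.Nonempty := front_mem_nonempty hF hne hs
  have hsne' : s'.Nonempty := front_mem_nonempty hF hne hs'
  have h1 : InitSegF s (s ∪ t) := shift_union_left hsne hst
  have h2 : InitSegF s' (s ∪ t) := huu ▸ shift_union_left hsne' hst'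
  have hss' : s = s' := by
    rcases initSegF_comparable h1 h2 with h | h
    · exact hF.2.2.1 _ hs _ hs' h
    · exact (hF.2.2.1 _ hs' _ hs h).symm
  refine ⟨hss', ?_⟩
  have hmin : s.min' hsne = s'.min' hsne' := by congr 1
  have h3 : InitSegF t ((s ∪ t).erase (s.min' hsne)) := shift_union_right hsne hst
  have h4 : InitSegF t' ((s' ∪ t').erase (s'.min' hsne')) := shift_union_right hsne' hst'
  rw [← huu, ← hmin] at h4
  rcases initSegF_comparable h3 h4 with h | h
  · exact hF.2.2.1 _ ht _ ht' h
  · exact (hF.2.2.1 _ ht' _ ht h).symm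

lemma pairfront_mem_subset (hF : IsFront F A) (hne : F ≠ {∅}) {u : Finset ℕ}
    (hu : u ∈ PairFront F) : ↑u ⊆ A := by
  obtain ⟨s, t, hs, ht, -, rfl⟩ := hu
  intro x hx
  have hx' : x ∈ s ∪ t := by exact_mod_cast hx
  rcases Finset.mem_union.1 hx' with h | h
  · exact front_mem_subset hF hne hs (by exact_mod_cast h)
  · exact front_mem_subset hF hne ht (by exact_mod_cast h)

lemma pairfront_nonempty (hF : IsFront F A) (hne : F ≠ {∅}) {u : Finset ℕ}
    (hu : u ∈ PairFront F) : u.Nonempty := by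
  obtain ⟨s, t, hs, ht, -, rfl⟩ := hu
  exact (front_mem_nonempty hF hne hs).inl

/-- Members of the pair front are initial-segment decompositions of infinite subsets. -/
lemma pairfront_seg_exists (hF : IsFront F A) (hne : F ≠ {∅}) {B : Set ℕ}
    (hBA : B ⊆ A) (hB : B.Infinite) :
    ∃ s t, s ∈ F ∧ t ∈ F ∧ Shift s t ∧ InitSegS s B ∧
      InitSegS t (B \ {sInf B}) ∧ InitSegS (s ∪ t) B := by
  obtain ⟨s, ⟨hsF, hseg⟩, -⟩ := hF.2.2.2 B hBA hB
  have hinf : (B \ {sInf B}).Infinite := hB.diff (Set.finite_singleton _)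
  obtain ⟨t, ⟨htF, htseg⟩, -⟩ := hF.2.2.2 (B \ {sInf B}) (Set.diff_subset.trans hBA) hinf
  have hsne : s.Nonempty := front_mem_nonempty hF hne hsF
  refine ⟨s, t, hsF, htF, ⟨B, hB, hseg, htseg⟩, hseg, htseg, ?_, ?_⟩
  · intro x hx
    have hx' : x ∈ s ∪ t := by exact_mod_cast hx
    rcases Finset.mem_union.1 hx' with h | h
    · exact hseg.1 (by exact_mod_cast h)
    · exact (htseg.1 (by exact_mod_cast h)).1
  · intro x hx b hb hbu
    rcases Finset.mem_union.1 hx with hxs | hxt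
    · exact hseg.2 x hxs b hb (fun hc => hbu (Finset.mem_union_left t hc))
    · have hbne : b ≠ sInf B := by
        intro hc
        exact hbu (Finset.mem_union_left t (hc ▸ initSegS_min_mem hseg hsne))
      exact htseg.2 x hxt b ⟨hb, hbne⟩ (fun hc => hbu (Finset.mem_union_right s hc))

lemma pairfront_isFront (hF : IsFront F A) (hne : F ≠ {∅}) :
    IsFront (PairFront F) A := by
  refine ⟨hF.1, Or.inr ?_, ?_, ?_⟩
  · apply Set.Subset.antisymm
    · intro x hx
      simp only [Set.mem_iUnion] at hx
      obtain ⟨u, hu, hx⟩ := hx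
      exact pairfront_mem_subset hF hne hu hx
    · intro x hx
      have hx' : x ∈ ⋃ s ∈ F, (↑s : Set ℕ) := by rw [front_union_eq hF hne]; exact hx
      simp only [Set.mem_iUnion] at hx'
      obtain ⟨s, hsF, hxs⟩ := hx'
      have hsne : s.Nonempty := front_mem_nonempty hF hne hsF
      set B : Set ℕ := ↑s ∪ (A ∩ Set.Ioi (s.max' hsne)) with hBdef
      have hBA : B ⊆ A := by
        intro y hy
        rcases hy with hy | hy
        · exact front_mem_subset hF hne hsF hy
        · exact hy.1
      have hBinf : B.Infinite := ((infinite_inter_Ioi hF.1 _).mono Set.subset_union_right)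
      have hseg : InitSegS s B := by
        refine ⟨Set.subset_union_left, fun a ha b hb hbs => ?_⟩
        rcases hb with hb | hb
        · exact absurd (by exact_mod_cast hb) hbs
        · exact lt_of_le_of_lt (s.le_max' a ha) hb.2
      have hinf : (B \ {sInf B}).Infinite := hBinf.diff (Set.finite_singleton _)
      obtain ⟨t, ⟨htF, htseg⟩, -⟩ := hF.2.2.2 (B \ {sInf B}) (Set.diff_subset.trans hBA) hinf
      have hu : s ∪ t ∈ PairFront F := ⟨s, t, hsF, htF, ⟨B, hBinf, hseg, htseg⟩, rfl⟩
      exact Set.mem_biUnion hu (by exact_mod_cast Finset.mem_union_left t (by exact_mod_cast hxs))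
  · -- thinness
    rintro u hu v hv huv
    obtain ⟨s, t, hs, ht, hst, rfl⟩ := hu
    obtain ⟨s', t', hs', ht', hst', rfl⟩ := hv
    have hsne : s.Nonempty := front_mem_nonempty hF hne hs
    have hsne' : s'.Nonempty := front_mem_nonempty hF hne hs'
    have h1 : InitSegF s (s' ∪ t') :=
      initSegF_trans (shift_union_left hsne hst) huv
    have h2 : InitSegF s' (s' ∪ t') := shift_union_left hsne' hst'
    have hss' : s = s' := by
      rcases initSegF_comparable h1 h2 with h | h
      · exact hF.2.2.1 _ hs _ hs' h
      · exact (hF.2.2.1 _ hs' _ hs h).symm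
    have hmin : (s ∪ t).min' (hsne.inl) = s.min' hsne := shift_union_min hsne hst
    have hmin' : s.min' hsne = s'.min' hsne' := by congr 1
    have h3 : InitSegF t ((s ∪ t).erase (s.min' hsne)) := shift_union_right hsne hst
    have h4 : InitSegF ((s ∪ t).erase (s.min' hsne)) ((s' ∪ t').erase (s.min' hsne)) :=
      initSegF_erase huv
    have h5 : InitSegF t' ((s' ∪ t').erase (s.min' hsne)) := by
      rw [hmin']
      exact shift_union_right hsne' hst'
    have htt' : t = t' := by
      rcases initSegF_comparable (initSegF_trans h3 h4) h5 with h | h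
      · exact hF.2.2.1 _ ht _ ht' h
      · exact (hF.2.2.1 _ ht' _ ht h).symm
    rw [hss', htt']
  · -- the ∃! condition
    intro B hBA hB
    obtain ⟨s, t, hsF, htF, hshift, hsseg, htseg, huseg⟩ := pairfront_seg_exists hF hne hBA hB
    refine ⟨s ∪ t, ⟨⟨s, t, hsF, htF, hshift, rfl⟩, huseg⟩, ?_⟩
    rintro v ⟨⟨s', t', hs', ht', hst', rfl⟩, hvseg⟩
    have hsne' : s'.Nonempty := front_mem_nonempty hF hne hs'
    have h1 : InitSegS s' B := initSegS_trans (shift_union_left hsne' hst') hvseg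
    obtain ⟨w, -, huniq⟩ := hF.2.2.2 B hBA hB
    have hs'eq : s' = s := (huniq s' ⟨hs', h1⟩).trans (huniq s ⟨hsF, hsseg⟩).symm
    have hune : (s' ∪ t').Nonempty := hsne'.inl
    have hminv : (s' ∪ t').min' hune = sInf B := (initSegS_min hvseg hune).symm
    have h2 : InitSegS ((s' ∪ t').erase ((s' ∪ t').min' hune)) (B \ {sInf B}) :=
      initSegS_erase hvseg hune
    have h3 : InitSegF t' ((s' ∪ t').erase ((s' ∪ t').min' hune)) := by
      rw [shift_union_min hsne' hst']
      exact shift_union_right hsne' hst'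
    have h4 : InitSegS t' (B \ {sInf B}) := initSegS_trans h3 h2
    have hinf : (B \ {sInf B}).Infinite := hB.diff (Set.finite_singleton _)
    obtain ⟨w', -, huniq'⟩ := hF.2.2.2 (B \ {sInf B}) (Set.diff_subset.trans hBA) hinf
    have ht'eq : t' = t := (huniq' t' ⟨ht', h4⟩).trans (huniq' t ⟨htF, htseg⟩).symm
    rw [hs'eq, ht'eq]

end PairFrontMain

section Decode

variable {F : Set (Finset ℕ)} {A : Set ℕ}

/-- The key decoding lemma: if `u ◁ u'` in the pair front, the second component of `u`
equals the first component of `u'`. -/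
lemma pairfront_shift_link (hF : IsFront F A) (hne : F ≠ {∅})
    {s t s' t' : Finset ℕ} (hs : s ∈ F) (ht : t ∈ F) (hst : Shift s t)
    (hs' : s' ∈ F) (ht' : t' ∈ F) (hst' : Shift s' t')
    (hshift : Shift (s ∪ t) (s' ∪ t')) : t = s' := by
  have hsne : s.Nonempty := front_mem_nonempty hF hne hs
  have hsne' : s'.Nonempty := front_mem_nonempty hF hne hs'
  set u : Finset ℕ := s ∪ t with hu
  set u' : Finset ℕ := s' ∪ t' with hu'
  have hune : u.Nonempty := hsne.inl
  have hm : u.min' hune = s.min' hsne := shift_union_min hsne hst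
  obtain ⟨humin, hucomp⟩ := shift_dest hune hshift
  -- the ambient infinite set
  have huA : (↑u : Set ℕ) ⊆ A := pairfront_mem_subset hF hne ⟨s, t, hs, ht, hst, rfl⟩
  have huA' : (↑u' : Set ℕ) ⊆ A := pairfront_mem_subset hF hne ⟨s', t', hs', ht', hst', rfl⟩
  have huune : (u ∪ u').Nonempty := hune.inl
  set M : ℕ := (u ∪ u').max' huune with hM
  set W : Set ℕ := ↑(u.erase (u.min' hune)) ∪ (↑u' ∪ (A ∩ Set.Ioi M)) with hW
  have hWA : W ⊆ A := by
    intro x hx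
    rcases hx with hx | hx | hx
    · exact huA (by
        have : x ∈ u.erase (u.min' hune) := by exact_mod_cast hx
        exact_mod_cast Finset.mem_of_mem_erase this)
    · exact huA' hx
    · exact hx.1
  have hWinf : W.Infinite :=
    ((infinite_inter_Ioi hF.1 M).mono (Set.subset_union_right.trans Set.subset_union_right))
  have hleM : ∀ x, x ∈ u ∨ x ∈ u' → x ≤ M := by
    intro x hx
    apply Finset.le_max'
    rcases hx with hx | hx
    · exact Finset.mem_union_left _ hx
    · exact Finset.mem_union_right _ hx
  -- t is an initial segment of W
  have ht3 : InitSegF t (u.erase (u.min' hune)) := by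
    rw [hm]; exact shift_union_right hsne hst
  have htW : InitSegS t W := by
    apply initSegS_trans ht3
    constructor
    · exact fun x hx => Or.inl hx
    · intro x hx b hb hbs
      have hxu : x ∈ u := Finset.mem_of_mem_erase hx
      rcases hb with hb | hb | hb
      · exact absurd (by exact_mod_cast hb) hbs
      · -- b ∈ u' but not in u.erase min
        have hbu' : b ∈ u' := by exact_mod_cast hb
        rcases hucomp with hc | hc
        · exact hc.2 x hx b hbu' hbs
        · exact absurd (hc.1 hbu') hbs
      · have h1 : x ≤ M := hleM x (Or.inl hxu)
        have h2 : M < b := hb.2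
        omega
  -- s' is an initial segment of W
  have hs'W : InitSegS s' W := by
    apply initSegS_trans (shift_union_left hsne' hst')
    constructor
    · exact fun x hx => Or.inr (Or.inl hx)
    · intro x hx b hb hbs
      rcases hb with hb | hb | hb
      · -- b ∈ u.erase min, b ∉ u'
        have hbe : b ∈ u.erase (u.min' hune) := by exact_mod_cast hb
        rcases hucomp with hc | hc
        · exact absurd (hc.1 hbe) hbs
        · exact hc.2 x hx b hbe hbs
      · exact absurd (by exact_mod_cast hb) hbs
      · have h1 : x ≤ M := hleM x (Or.inr hx)
        have h2 : M < b := hb.2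
        omega
  obtain ⟨w, -, huniq⟩ := hF.2.2.2 W hWA hWinf
  exact (huniq t ⟨ht, htW⟩).trans (huniq s' ⟨hs', hs'W⟩).symm

/-- Noncomputable decoding functions for the pair front. -/
noncomputable def pfFst (F : Set (Finset ℕ)) (u : Finset ℕ) : Finset ℕ :=
  Classical.epsilon (fun s => ∃ t, s ∈ F ∧ t ∈ F ∧ Shift s t ∧ u = s ∪ t)

noncomputable def pfSnd (F : Set (Finset ℕ)) (u : Finset ℕ) : Finset ℕ :=
  Classical.epsilon (fun t => pfFst F u ∈ F ∧ t ∈ F ∧ Shift (pfFst F u) t ∧ u = pfFst F u ∪ t)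

lemma pf_spec {F : Set (Finset ℕ)} {u : Finset ℕ} (h : u ∈ PairFront F) :
    pfFst F u ∈ F ∧ pfSnd F u ∈ F ∧ Shift (pfFst F u) (pfSnd F u) ∧
      u = pfFst F u ∪ pfSnd F u := by
  obtain ⟨s, t, hs, ht, hst, rfl⟩ := h
  have h2 := Classical.epsilon_spec
    (p := fun s' => ∃ t', s' ∈ F ∧ t' ∈ F ∧ Shift s' t' ∧ s ∪ t = s' ∪ t')
    ⟨s, t, hs, ht, hst, rfl⟩
  obtain ⟨t'', h2a, h2b, h2c, h2d⟩ := h2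
  have h3 := Classical.epsilon_spec (p := fun t' => pfFst F (s ∪ t) ∈ F ∧ t' ∈ F ∧
      Shift (pfFst F (s ∪ t)) t' ∧ s ∪ t = pfFst F (s ∪ t) ∪ t') ⟨t'', h2a, h2b, h2c, h2d⟩
  exact ⟨h3.1, h3.2.1, h3.2.2.1, h3.2.2.2⟩

lemma pf_eq {F : Set (Finset ℕ)} {A : Set ℕ} (hF : IsFront F A) (hne : F ≠ {∅}) {s t : Finset ℕ}
    (hs : s ∈ F) (ht : t ∈ F) (hst : Shift s t) :
    pfFst F (s ∪ t) = s ∧ pfSnd F (s ∪ t) = t := by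
  have hmem : s ∪ t ∈ PairFront F := ⟨s, t, hs, ht, hst, rfl⟩
  obtain ⟨h1, h2, h3, h4⟩ := pf_spec hmem
  obtain ⟨e1, e2⟩ := pairfront_unique hF hne h1 h2 h3 hs ht hst h4.symm
  exact ⟨e1, e2⟩

end Decode

/-! ### Basic closure properties of better partial orders -/

lemma isFront_singleton_empty : IsFront {∅} (Set.univ : Set ℕ) := by
  refine ⟨Set.infinite_univ, Or.inl rfl, ?_, ?_⟩
  · intro s hs t ht _
    rw [Set.mem_singleton_iff] at hs ht
    rw [hs, ht]
  · intro B _ _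
    exact ⟨∅, ⟨rfl, initSegS_empty B⟩, fun t ht => ht.1⟩

lemma shift_empty_empty : Shift (∅ : Finset ℕ) ∅ :=
  ⟨Set.univ, Set.infinite_univ, initSegS_empty _, initSegS_empty _⟩

lemma isBpo_refl {α : Type*} {r : α → α → Prop} (h : IsBpo r) (x : α) : r x x := by
  by_contra hx
  exact h ⟨Set.univ, {∅}, fun _ => x, isFront_singleton_empty,
    fun s _ t _ _ => hx⟩

lemma isBpo_of_map {α β : Type*} {rα : α → α → Prop} {rβ : β → β → Prop} (φ : α → β)
    (hφ : ∀ a b, rβ (φ a) (φ b) → rα a b) (h : IsBpo rβ) : IsBpo rα := by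
  rintro ⟨A, F, f, hF, hbad⟩
  exact h ⟨A, F, φ ∘ f, hF, fun s hs t ht hst hr => hbad s hs t ht hst (hφ _ _ hr)⟩

/-- The partition step for pairs along a front. -/
lemma front_pair_partition {F : Set (Finset ℕ)} {A : Set ℕ} (hF : IsFront F A)
    (hne : F ≠ {∅}) (p : Finset ℕ → Finset ℕ → Prop) :
    ∃ B ⊆ A, B.Infinite ∧
      ((∀ s ∈ F, ∀ t ∈ F, Shift s t → ↑s ⊆ B → ↑t ⊆ B → p s t) ∨
       (∀ s ∈ F, ∀ t ∈ F, Shift s t → ↑s ⊆ B → ↑t ⊆ B → ¬ p s t)) := by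
  have hG := pairfront_isFront hF hne
  obtain ⟨B, hBA, hBinf, hhom⟩ :=
    nash_williams hG {u | p (pfFst F u) (pfSnd F u)} (le_refl A) hF.1
  refine ⟨B, hBA, hBinf, ?_⟩
  have key : ∀ s ∈ F, ∀ t ∈ F, Shift s t → (↑s : Set ℕ) ⊆ B → (↑t : Set ℕ) ⊆ B →
      (s ∪ t ∈ PairFront F ∧ (↑(s ∪ t) : Set ℕ) ⊆ B ∧
        pfFst F (s ∪ t) = s ∧ pfSnd F (s ∪ t) = t) := by
    intro s hs t ht hst hsB htB
    obtain ⟨e1, e2⟩ := pf_eq hF hne hs ht hst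
    refine ⟨⟨s, t, hs, ht, hst, rfl⟩, ?_, e1, e2⟩
    intro x hx
    have hx' : x ∈ s ∪ t := by exact_mod_cast hx
    rcases Finset.mem_union.1 hx' with h | h
    · exact hsB (by exact_mod_cast h)
    · exact htB (by exact_mod_cast h)
  rcases hhom with hhom | hhom
  · left
    intro s hs t ht hst hsB htB
    obtain ⟨hmem, hsub, e1, e2⟩ := key s hs t ht hst hsB htB
    have h' : p (pfFst F (s ∪ t)) (pfSnd F (s ∪ t)) := hhom _ hmem hsub
    rwa [e1, e2] at h'
  · right
    intro s hs t ht hst hsB htB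
    obtain ⟨hmem, hsub, e1, e2⟩ := key s hs t ht hst hsB htB
    have h' : ¬ p (pfFst F (s ∪ t)) (pfSnd F (s ∪ t)) := hhom _ hmem hsub
    rwa [e1, e2] at h'

/-- Every array into a bpo has a perfect subarray. -/
lemma exists_perfect {α : Type*} {rq : α → α → Prop} (hq : IsBpo rq)
    {F : Set (Finset ℕ)} {A : Set ℕ} (hF : IsFront F A) (hne : F ≠ {∅})
    (g : Finset ℕ → α) :
    ∃ B ⊆ A, B.Infinite ∧
      ∀ s ∈ F, ∀ t ∈ F, Shift s t → ↑s ⊆ B → ↑t ⊆ B → rq (g s) (g t) := by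
  obtain ⟨B, hBA, hBinf, hhom⟩ := front_pair_partition hF hne (fun s t => rq (g s) (g t))
  rcases hhom with hhom | hhom
  · exact ⟨B, hBA, hBinf, hhom⟩
  · exfalso
    apply hq
    refine ⟨B, Restrict F B, g, front_restrict hF hBA hBinf, ?_⟩
    rintro s ⟨hsF, hsB⟩ t ⟨htF, htB⟩ hst
    exact hhom s hsF t htF hst hsB htB

lemma pairFront_ne {F : Set (Finset ℕ)} {A : Set ℕ} (hF : IsFront F A) (hne : F ≠ {∅}) :
    PairFront F ≠ {∅} := by
  intro hc
  have hmem : (∅ : Finset ℕ) ∈ PairFront F := by rw [hc]; rfl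
  have := pairfront_nonempty hF hne hmem
  simp [Finset.Nonempty] at this

/-- A set which is downward closed w.r.t. a relation. -/
def IsLowerWrt {α : Type*} (r : α → α → Prop) (D : Set α) : Prop :=
  ∀ ⦃a b : α⦄, r a b → b ∈ D → a ∈ D

/-- The downsets of a bpo, ordered by inclusion, form a bpo. -/
theorem isBpo_downsets {α : Type*} {r : α → α → Prop} (h : IsBpo r) :
    IsBpo (fun D D' : {D : Set α // IsLowerWrt r D} => D.1 ⊆ D'.1) := by
  rintro ⟨A, F, f, hF, hbad⟩
  by_cases hne : F = {∅}
  · subst hne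
    exact hbad ∅ rfl ∅ rfl shift_empty_empty (le_refl _)
  have hG := pairfront_isFront hF hne
  have hGne := pairFront_ne hF hne
  -- witnesses
  have hw : ∀ u ∈ PairFront F, ∃ x, x ∈ (f (pfFst F u)).1 ∧ x ∉ (f (pfSnd F u)).1 := by
    intro u hu
    obtain ⟨h1, h2, h3, -⟩ := pf_spec hu
    have := hbad _ h1 _ h2 h3
    exact Set.not_subset.1 this
  -- get an inhabitant of α
  obtain ⟨u₀, hu₀F, -⟩ := front_shift_pair hG
  obtain ⟨x₀, -, -⟩ := hw u₀ hu₀F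
  haveI : Nonempty α := ⟨x₀⟩
  set p : Finset ℕ → α := fun u =>
    Classical.epsilon (fun x => x ∈ (f (pfFst F u)).1 ∧ x ∉ (f (pfSnd F u)).1) with hp
  have hpspec : ∀ u ∈ PairFront F, p u ∈ (f (pfFst F u)).1 ∧ p u ∉ (f (pfSnd F u)).1 :=
    fun u hu => Classical.epsilon_spec (hw u hu)
  -- perfect subarray
  obtain ⟨B, hBA, hBinf, hperf⟩ := exists_perfect h hG hGne p
  -- find a shift pair in the restricted pair front
  obtain ⟨u, hu, u', hu', huu'⟩ := front_shift_pair (front_restrict hG hBA hBinf)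
  have huG := hu.1
  have hu'G := hu'.1
  have hr : r (p u) (p u') := hperf u huG u' hu'G huu' hu.2 hu'.2
  -- link
  obtain ⟨h1, h2, h3, h4⟩ := pf_spec huG
  obtain ⟨h1', h2', h3', h4'⟩ := pf_spec hu'G
  have hlink : pfSnd F u = pfFst F u' := by
    apply pairfront_shift_link hF hne h1 h2 h3 h1' h2' h3'
    rw [← h4, ← h4']
    exact huu'
  have hmem : p u' ∈ (f (pfSnd F u)).1 := by
    rw [hlink]
    exact (hpspec u' hu'G).1
  exact (hpspec u huG).2 ((f (pfSnd F u)).2 hr hmem)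

/-- Products of bpos are bpos. -/
lemma isBpo_prod {α β : Type*} {r1 : α → α → Prop} {r2 : β → β → Prop}
    (h1 : IsBpo r1) (h2 : IsBpo r2) :
    IsBpo (fun x y : α × β => r1 x.1 y.1 ∧ r2 x.2 y.2) := by
  rintro ⟨A, F, f, hF, hbad⟩
  by_cases hne : F = {∅}
  · subst hne
    exact hbad ∅ rfl ∅ rfl shift_empty_empty
      ⟨isBpo_refl h1 _, isBpo_refl h2 _⟩
  obtain ⟨B, hBA, hBinf, hperf⟩ := exists_perfect h1 hF hne (fun s => (f s).1)
  apply h2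
  refine ⟨B, Restrict F B, fun s => (f s).2, front_restrict hF hBA hBinf, ?_⟩
  rintro s ⟨hsF, hsB⟩ t ⟨htF, htB⟩ hst hr2
  exact hbad s hsF t htF hst ⟨hperf s hsF t htF hst hsB htB, hr2⟩

/-- ℕ is a bpo. -/
lemma isBpo_natLe : IsBpo ((· ≤ ·) : ℕ → ℕ → Prop) := by
  rintro ⟨A, F, f, hF, hbad⟩
  obtain ⟨g, hgF, hgsh⟩ := front_shift_chain hF
  have hdesc : ∀ n, f (g (n+1)) < f (g n) := by
    intro n
    have := hbad _ (hgF n) _ (hgF (n+1)) (hgsh n)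
    omega
  have hbound : ∀ n, f (g n) + n ≤ f (g 0) := by
    intro n
    induction n with
    | zero => omega
    | succ m ih => have := hdesc m; omega
  have := hbound (f (g 0) + 1)
  omega

/-! ### Multisets: counting, Hall's theorem, projectivity -/

section MultisetLemmas

attribute [local instance] Classical.propDecidable

variable {α : Type*}

lemma multiset_exists_enum (M : Multiset α) :
    ∃ (k : ℕ) (g : Fin k → α), M = Multiset.map g (Finset.univ : Finset (Fin k)).val := by
  refine ⟨M.toList.length, M.toList.get, ?_⟩
  rw [Fin.univ_def]
  show M = Multiset.map M.toList.get ↑(List.finRange M.toList.length)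
  rw [Multiset.map_coe, List.map_get_finRange, Multiset.coe_toList]

/-- Number of elements of `M` lying in `U`, with multiplicity. -/
noncomputable def mcount (U : Set α) (M : Multiset α) : ℕ :=
  Multiset.card (M.filter (fun x => x ∈ U))

lemma mcount_mono {U V : Set α} (h : U ⊆ V) (M : Multiset α) :
    mcount U M ≤ mcount V M := by
  apply Multiset.card_le_card
  apply Multiset.monotone_filter_right
  intro x hx
  exact h hx

lemma mcount_map {k : ℕ} (g : Fin k → α) (U : Set α) :
    mcount U (Multiset.map g (Finset.univ : Finset (Fin k)).val) =
      (Finset.univ.filter (fun x => g x ∈ U)).card := by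
  rw [mcount, Multiset.filter_map]
  rw [Multiset.card_map]
  rfl

end MultisetLemmas

section MultisetOrder

attribute [local instance] Classical.propDecidable

variable {P : Type*} [PartialOrder P]

/-- Hall's theorem: counting characterization implies multiset embeddability. -/
lemma mEmbed_of_counts {N M : Multiset P}
    (h : ∀ U : Set P, IsUpperSet U → mcount U N ≤ mcount U M) :
    MEmbed (· ≤ ·) N M := by
  obtain ⟨n, ν, rfl⟩ := multiset_exists_enum N
  obtain ⟨m, μ, rfl⟩ := multiset_exists_enum M
  set t : Fin n → Finset (Fin m) := fun x => Finset.univ.filter (fun j => ν x ≤ μ j) with ht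
  have hall : ∀ S : Finset (Fin n), S.card ≤ (S.biUnion t).card := by
    intro S
    obtain ⟨U, hUup, hUmem⟩ : ∃ U : Set P, IsUpperSet U ∧ ∀ p, p ∈ U ↔ ∃ x ∈ S, ν x ≤ p := by
      refine ⟨{p | ∃ x ∈ S, ν x ≤ p}, ?_, fun p => Iff.rfl⟩
      rintro a b hab ⟨x, hx, hxa⟩
      exact ⟨x, hx, hxa.trans hab⟩
    have h1 : S.card ≤ mcount U (Multiset.map ν (Finset.univ : Finset (Fin n)).val) := by
      rw [mcount_map]
      apply Finset.card_le_card
      intro x hx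
      simp only [Finset.mem_filter]
      exact ⟨Finset.mem_univ x, (hUmem (ν x)).2 ⟨x, hx, le_refl _⟩⟩
    have h2 : (S.biUnion t).card = mcount U (Multiset.map μ (Finset.univ : Finset (Fin m)).val) := by
      rw [mcount_map]
      congr 1
      ext j
      simp only [Finset.mem_biUnion, Finset.mem_filter, Finset.mem_univ, true_and, ht]
      rw [hUmem (μ j)]
    have h3 := h U hUup
    omega
  obtain ⟨f, hfinj, hft⟩ := (Finset.all_card_le_biUnion_card_iff_exists_injective t).1 hall
  have hle : ∀ x, ν x ≤ μ (f x) := by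
    intro x
    have := hft x
    exact (Finset.mem_filter.1 this).2
  refine ⟨Multiset.map (fun x => μ (f x)) (Finset.univ : Finset (Fin n)).val, ?_, ?_⟩
  · have h1 : Multiset.map (fun x => μ (f x)) (Finset.univ : Finset (Fin n)).val =
        Multiset.map μ (Multiset.map f (Finset.univ : Finset (Fin n)).val) := by
      rw [Multiset.map_map]; rfl
    rw [h1]
    apply Multiset.map_le_map
    rw [Multiset.le_iff_subset ((Finset.univ : Finset (Fin n)).nodup.map hfinj)]
    intro j _
    simp [Finset.mem_val]
  · rw [Multiset.rel_map]
    exact Multiset.rel_refl_of_refl_on (fun x _ => hle x)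

/-- `N` covers `M` from below. -/
def MCover (N M : Multiset P) : Prop := ∀ p ∈ M, ∃ x ∈ N, x ≤ p

lemma mProj_of_rel {r : P → P → Prop} {N M : Multiset P} (h : Multiset.Rel r N M) :
    MProj r N M := by
  induction h with
  | zero => exact ⟨0, by simp, by simp, by simp⟩
  | @cons a b as bs hab hrel ih =>
    obtain ⟨L, hL1, hL2, hL3⟩ := ih
    refine ⟨(a, ({b} : Multiset P)) ::ₘ L, ?_, ?_, ?_⟩
    · rw [Multiset.map_cons, hL1]
    · rw [Multiset.map_cons, Multiset.sum_cons, hL2, Multiset.singleton_add]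
    · intro x hx
      rcases Multiset.mem_cons.1 hx with rfl | hx
      · refine ⟨by simp, ?_⟩
        intro p hp
        rw [Multiset.mem_singleton.1 hp]
        exact hab
      · exact hL3 x hx

lemma mProj_cons {r : P → P → Prop} {N M : Multiset P} {p : P}
    (h : MProj r N M) (hc : ∃ x ∈ N, r x p) : MProj r N (p ::ₘ M) := by
  classical
  obtain ⟨L, hL1, hL2, hL3⟩ := h
  obtain ⟨n, hnN, hnp⟩ := hc
  rw [← hL1] at hnN
  obtain ⟨x, hxL, hxn⟩ := Multiset.mem_map.1 hnN
  have hLx : x ::ₘ L.erase x = L := Multiset.cons_erase hxL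
  refine ⟨(x.1, p ::ₘ x.2) ::ₘ L.erase x, ?_, ?_, ?_⟩
  · rw [Multiset.map_cons]
    have : N = Multiset.map Prod.fst (x ::ₘ L.erase x) := by rw [hLx, hL1]
    rw [this, Multiset.map_cons]
  · rw [Multiset.map_cons, Multiset.sum_cons]
    have : M = (Multiset.map Prod.snd (x ::ₘ L.erase x)).sum := by rw [hLx, hL2]
    rw [this, Multiset.map_cons, Multiset.sum_cons, Multiset.cons_add]
  · intro y hy
    rcases Multiset.mem_cons.1 hy with rfl | hy
    · constructor
      · simp
      · intro q hq
        rcases Multiset.mem_cons.1 hq with rfl | hq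
        · rw [hxn]; exact hnp
        · exact (hL3 x hxL).2 q hq
    · exact hL3 y (Multiset.mem_of_mem_erase hy)

lemma mProj_add {r : P → P → Prop} {N M M'' : Multiset P}
    (h : MProj r N M) (hc : ∀ p ∈ M'', ∃ x ∈ N, r x p) : MProj r N (M + M'') := by
  induction M'' using Multiset.induction with
  | empty => simpa using h
  | @cons a M'' ih =>
    have h1 : M + a ::ₘ M'' = a ::ₘ (M + M'') := by
      rw [add_comm, Multiset.cons_add, add_comm]
    rw [h1]
    apply mProj_cons
    · exact ih (fun p hp => hc p (Multiset.mem_cons_of_mem hp))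
    · exact hc a (Multiset.mem_cons_self _ _)

lemma mProj_of_mEmbed_cover {N M : Multiset P}
    (he : MEmbed (· ≤ ·) N M) (hc : MCover N M) : MProj (· ≤ ·) N M := by
  obtain ⟨M', hM'le, hrel⟩ := he
  obtain ⟨M'', rfl⟩ := Multiset.le_iff_exists_add.1 hM'le
  apply mProj_add (mProj_of_rel hrel)
  intro p hp
  exact hc p (Multiset.mem_add.2 (Or.inr hp))

lemma mProj_refl (M : Multiset P) : MProj (· ≤ ·) M M :=
  mProj_of_rel (Multiset.rel_refl_of_refl_on (fun x _ => le_refl x))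

end MultisetOrder

/-! ### The main theorem -/

section Final

variable {P : Type*} [PartialOrder P]

lemma isBpo_upperRev (h : IsBpo ((· ≤ ·) : P → P → Prop)) :
    IsBpo (fun U V : {U : Set P // IsUpperSet U} => V.1 ⊆ U.1) := by
  have hd := isBpo_downsets h
  refine isBpo_of_map
    (rβ := fun D D' : {D : Set P // IsLowerWrt (· ≤ ·) D} => D.1 ⊆ D'.1)
    (fun U => ⟨U.1ᶜ, fun a b hab hb ha => hb (U.2 hab ha)⟩) ?_ hd
  intro U V hUV x hx
  by_contra hc
  exact hUV hc hx

/-- The relation on pairs (upper set, count threshold). -/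
def URel (z w : {U : Set P // IsUpperSet U} × ℕ) : Prop :=
  w.1.1 ⊆ z.1.1 ∧ z.2 ≤ w.2

lemma isBpo_uRel (h : IsBpo ((· ≤ ·) : P → P → Prop)) : IsBpo (URel (P := P)) :=
  isBpo_prod (isBpo_upperRev h) isBpo_natLe

/-- Encoding of a multiset as a downset of `URel`. -/
def mEncode (M : Multiset P) : {D : Set ({U : Set P // IsUpperSet U} × ℕ) // IsLowerWrt URel D} :=
  ⟨{z | z.2 + 1 ≤ mcount z.1.1 M}, by
    rintro z w ⟨hsub, hle⟩ hw
    have h1 : mcount w.1.1 M ≤ mcount z.1.1 M := mcount_mono hsub M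
    have h2 : w.2 + 1 ≤ mcount w.1.1 M := hw
    show z.2 + 1 ≤ mcount z.1.1 M
    omega⟩

lemma isBpo_mEmbed (h : IsBpo ((· ≤ ·) : P → P → Prop)) :
    IsBpo (MEmbed (· ≤ ·) : Multiset P → Multiset P → Prop) := by
  apply isBpo_of_map
    (rβ := fun D D' : {D : Set ({U : Set P // IsUpperSet U} × ℕ) // IsLowerWrt URel D} =>
      D.1 ⊆ D'.1)
    mEncode ?_ (isBpo_downsets (isBpo_uRel h))
  intro N M hsub
  apply mEmbed_of_counts
  intro U hU
  rcases Nat.eq_zero_or_pos (mcount U N) with h0 | h0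
  · omega
  · have hz : ((⟨U, hU⟩, mcount U N - 1) : {U : Set P // IsUpperSet U} × ℕ) ∈ (mEncode N).1 := by
      show mcount U N - 1 + 1 ≤ mcount U N
      omega
    have := hsub hz
    have h1 : mcount U N - 1 + 1 ≤ mcount U M := this
    omega

lemma isBpo_mCover (h : IsBpo ((· ≤ ·) : P → P → Prop)) :
    IsBpo (MCover : Multiset P → Multiset P → Prop) := by
  apply isBpo_of_map
    (rβ := fun D D' : {D : Set P // IsLowerWrt (· ≤ ·) D} => D.1 ⊆ D'.1)
    (fun M => ⟨{q | ¬ ∃ x ∈ M, x ≤ q}, by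
      rintro a b hab hb ⟨x, hx, hxa⟩
      exact hb ⟨x, hx, hxa.trans hab⟩⟩) ?_ (isBpo_downsets h)
  intro N M hsub p hpM
  by_contra hc
  exact hsub hc ⟨p, hpM, le_refl p⟩

theorem stmt_11' (h : IsBpo ((· ≤ ·) : P → P → Prop)) :
    IsBpo (MProj ((· ≤ ·) : P → P → Prop)) := by
  rintro ⟨A, F, f, hF, hbad⟩
  by_cases hne : F = {∅}
  · subst hne
    exact hbad ∅ rfl ∅ rfl shift_empty_empty (mProj_refl _)
  obtain ⟨B, hBA, hBinf, hhom⟩ :=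
    front_pair_partition hF hne (fun s t => MCover (f s) (f t))
  rcases hhom with hpos | hneg
  · apply isBpo_mEmbed h
    refine ⟨B, Restrict F B, f, front_restrict hF hBA hBinf, ?_⟩
    rintro s ⟨hsF, hsB⟩ t ⟨htF, htB⟩ hst hemb
    exact hbad s hsF t htF hst
      (mProj_of_mEmbed_cover hemb (hpos s hsF t htF hst hsB htB))
  · apply isBpo_mCover h
    refine ⟨B, Restrict F B, f, front_restrict hF hBA hBinf, ?_⟩
    rintro s ⟨hsF, hsB⟩ t ⟨htF, htB⟩ hst hcov
    exact hneg s hsF t htF hst hsB htB hcov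

end Final


/-- If `P` is a better partial order, then the finite multisets of `P` with the
multiset projectivity relation `<<` form a better partial order. -/
theorem stmt_11 {P : Type*} [PartialOrder P]
    (h : IsBpo ((· ≤ ·) : P → P → Prop)) :
    IsBpo (MProj ((· ≤ ·) : P → P → Prop)) :=
  stmt_11' h

end Paper
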